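/- Let f : ℝ → ℝ be three times continuously differentiable, let dt > 0, θ ∈ [0,1], t_n ∈ ℝ, set t^{n,θ} = t_n + (1+θ)dt/2, f^{n+1} = f(t_n + dt), f^n = f(t_n), and f^{n,θ} = ((1+θ)/2) f^{n+1} + ((1-θ)/2) f^n. Then f^{n,θ} = f(t^{n,θ}) + (1/8)(1+θ)(1-θ) dt² f''(t^{n,θ}) + R where |R| ≤ C·dt³ for a constant C depending only on sup |f'''| on [t_n, t_n+dt]. -/

import Mathlib

lemma taylor2_bound (f : ℝ → ℝ) (hf : ContDiff ℝ 3 f) (a x M : ℝ)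
    (hM : ∀ t ∈ Set.uIcc a x, |iteratedDeriv 3 f t| ≤ M) :
    |f x - f a - deriv f a * (x - a) - iteratedDeriv 2 f a * (x - a) ^ 2 / 2|
      ≤ M * |x - a| ^ 3 / 2 := by
  have h3 : (3 : ℕ∞) = 2 + 1 := by norm_num
  have h2 : (2 : ℕ∞) = 1 + 1 := by norm_num
  have hd1 : Differentiable ℝ f := hf.differentiable (by norm_num)
  have hd2 : Differentiable ℝ (deriv f) := by
    have := hf.differentiable_iteratedDeriv 1 (by norm_num)
    rwa [iteratedDeriv_one] at this
  have hd3 : Differentiable ℝ (deriv (deriv f)) := by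
    have := hf.differentiable_iteratedDeriv 2 (by norm_num)
    rwa [iteratedDeriv_succ, iteratedDeriv_one] at this
  have e2 : iteratedDeriv 2 f = deriv (deriv f) := by
    rw [iteratedDeriv_succ, iteratedDeriv_one]
  have e3 : iteratedDeriv 3 f = deriv (deriv (deriv f)) := by
    rw [iteratedDeriv_succ, iteratedDeriv_succ, iteratedDeriv_one]
  set g : ℝ → ℝ := fun t => f x - f t - deriv f t * (x - t) -
    deriv (deriv f) t * (x - t) ^ 2 / 2 with hg
  have hgd : ∀ t : ℝ, HasDerivAt g (-(deriv (deriv (deriv f)) t) * (x - t) ^ 2 / 2) t := by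
    intro t
    have h1 : HasDerivAt f (deriv f t) t := (hd1 t).hasDerivAt
    have h2' : HasDerivAt (deriv f) (deriv (deriv f) t) t := (hd2 t).hasDerivAt
    have h3' : HasDerivAt (deriv (deriv f)) (deriv (deriv (deriv f)) t) t := (hd3 t).hasDerivAt
    have hq : HasDerivAt (fun t : ℝ => (x - t) ^ 2) (2 * (x - t) * (-1)) t := by
      have : HasDerivAt (fun t : ℝ => x - t) (-1) t := by
        simpa using (hasDerivAt_id t).const_sub x
      simpa using this.fun_pow 2
    have hq' : HasDerivAt (fun t : ℝ => x - t) (-1) t := by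
      simpa using (hasDerivAt_id t).const_sub x
    have := (((hasDerivAt_const t (f x)).sub h1).sub
      (h2'.mul hq')).sub ((h3'.mul hq).div_const 2)
    refine this.congr_deriv ?_
    ring
  have key : ∀ t ∈ Set.uIcc a x,
      ‖-(deriv (deriv (deriv f)) t) * (x - t) ^ 2 / 2‖ ≤ M * (x - a) ^ 2 / 2 := by
    intro t ht
    have hMt := hM t ht
    rw [e3] at hMt
    have habs : |x - t| ≤ |x - a| := by
      rw [Set.uIcc_eq_union] at ht
      rcases ht with ht | ht <;> rw [Set.mem_Icc] at ht <;>
        rw [abs_le] <;> constructor <;> cases abs_cases (x - a) <;> linarith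
    have h1 : (x - t) ^ 2 ≤ (x - a) ^ 2 := by
      have := sq_abs (x - t); have := sq_abs (x - a)
      nlinarith [abs_nonneg (x - t)]
    have hM0 : 0 ≤ M := le_trans (abs_nonneg _) hMt
    rw [Real.norm_eq_abs, abs_div, abs_mul, abs_neg]
    have : |(x - t) ^ 2| = (x - t) ^ 2 := abs_of_nonneg (sq_nonneg _)
    rw [this]
    have h2 : |(2 : ℝ)| = 2 := by norm_num
    rw [h2]
    apply div_le_div_of_nonneg_right ?_ (by norm_num)
    nlinarith [abs_nonneg (deriv (deriv (deriv f)) t), sq_nonneg (x - t)]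
  have conv : Convex ℝ (Set.uIcc a x) := convex_uIcc a x
  have hbound := conv.norm_image_sub_le_of_norm_hasDerivWithin_le
    (fun t ht => (hgd t).hasDerivWithinAt) key (Set.right_mem_uIcc) (Set.left_mem_uIcc)
  have hgx : g x = 0 := by simp [hg]
  have hga : g a = f x - f a - deriv f a * (x - a) - iteratedDeriv 2 f a * (x - a) ^ 2 / 2 := by
    rw [hg, e2]
  rw [hga, hgx, sub_zero, Real.norm_eq_abs, Real.norm_eq_abs] at hbound
  calc |f x - f a - deriv f a * (x - a) - iteratedDeriv 2 f a * (x - a) ^ 2 / 2|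
      ≤ M * (x - a) ^ 2 / 2 * |a - x| := hbound
    _ = M * |x - a| ^ 3 / 2 := by
        rw [abs_sub_comm, ← sq_abs (x - a)]; ring

/-- θ-weighted average Taylor expansion about the intermediate time `t^{n,θ}`. -/
theorem theta_average_taylor (f : ℝ → ℝ) (hf : ContDiff ℝ 3 f) (dt θ tn M : ℝ)
    (hdt : 0 < dt) (hθ : θ ∈ Set.Icc (0:ℝ) 1)
    (hM : ∀ t ∈ Set.Icc tn (tn + dt), |iteratedDeriv 3 f t| ≤ M) :
    ∃ R : ℝ,
      ((1 + θ) / 2) * f (tn + dt) + ((1 - θ) / 2) * f tn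
        = f (tn + (1 + θ) * dt / 2)
          + (1 / 8) * (1 + θ) * (1 - θ) * dt ^ 2
              * iteratedDeriv 2 f (tn + (1 + θ) * dt / 2)
          + R
      ∧ |R| ≤ M * dt ^ 3 := by
  obtain ⟨hθ0, hθ1⟩ := hθ
  set tθ : ℝ := tn + (1 + θ) * dt / 2 with htθ
  have hsub1 : Set.uIcc tθ (tn + dt) ⊆ Set.Icc tn (tn + dt) := by
    intro t ht
    rw [Set.mem_uIcc, htθ] at ht
    rw [Set.mem_Icc]
    rcases ht with ⟨h1, h2⟩ | ⟨h1, h2⟩ <;> constructor <;> nlinarith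
  have hsub2 : Set.uIcc tθ tn ⊆ Set.Icc tn (tn + dt) := by
    intro t ht
    rw [Set.mem_uIcc, htθ] at ht
    rw [Set.mem_Icc]
    rcases ht with ⟨h1, h2⟩ | ⟨h1, h2⟩ <;> constructor <;> nlinarith
  have hB1 := taylor2_bound f hf tθ (tn + dt) M (fun t ht => hM t (hsub1 ht))
  have hB2 := taylor2_bound f hf tθ tn M (fun t ht => hM t (hsub2 ht))
  have hM0 : 0 ≤ M := le_trans (abs_nonneg _) (hM tn (by constructor <;> nlinarith))
  set R1 : ℝ := f (tn + dt) - f tθ - deriv f tθ * (tn + dt - tθ)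
      - iteratedDeriv 2 f tθ * (tn + dt - tθ) ^ 2 / 2 with hR1
  set R2 : ℝ := f tn - f tθ - deriv f tθ * (tn - tθ)
      - iteratedDeriv 2 f tθ * (tn - tθ) ^ 2 / 2 with hR2
  clear_value tθ R1 R2
  refine ⟨((1 + θ) / 2) * R1 + ((1 - θ) / 2) * R2, ?_, ?_⟩
  · rw [hR1, hR2, htθ]; ring
  · have ha1 : |tn + dt - tθ| = (1 - θ) * dt / 2 := by
      rw [htθ, abs_of_nonneg] <;> nlinarith
    have ha2 : |tn - tθ| = (1 + θ) * dt / 2 := by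
      rw [htθ, abs_of_nonpos] <;> nlinarith
    rw [ha1] at hB1
    rw [ha2] at hB2
    calc |((1 + θ) / 2) * R1 + ((1 - θ) / 2) * R2|
        ≤ ((1 + θ) / 2) * |R1| + ((1 - θ) / 2) * |R2| := by
          refine le_trans (abs_add_le _ _) ?_
          rw [abs_mul, abs_mul, abs_of_nonneg (by linarith : (0:ℝ) ≤ (1 + θ) / 2),
            abs_of_nonneg (by linarith : (0:ℝ) ≤ (1 - θ) / 2)]
      _ ≤ ((1 + θ) / 2) * (M * ((1 - θ) * dt / 2) ^ 3 / 2)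
            + ((1 - θ) / 2) * (M * ((1 + θ) * dt / 2) ^ 3 / 2) := by
          gcongr
      _ = M * dt ^ 3 * ((1 + θ) * (1 - θ) ^ 3 + (1 - θ) * (1 + θ) ^ 3) / 32 := by ring
      _ ≤ M * dt ^ 3 := by
          have hpoly : (1 + θ) * (1 - θ) ^ 3 + (1 - θ) * (1 + θ) ^ 3 ≤ 32 := by
            nlinarith [sq_nonneg θ, sq_nonneg (θ ^ 2)]
          have hMd : 0 ≤ M * dt ^ 3 := mul_nonneg hM0 (pow_pos hdt 3).le
          nlinarith [mul_le_mul_of_nonneg_left hpoly hMd]
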